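/- Let n ≥ 2, and let p ≥ 0 and b ≥ 2 be integers with p + b ≤ n. Then the iterated product of the b−1 consecutive vectors e_{p+1}, e_{p+2}, …, e_{p+b−1} satisfies Ψ(e_{p+1}, …, e_{p+b−1}) = Σ_{r=0}^{b−1} (−1)^r q^{−(b−1−r)} v_{α(p,b,r)}, where α(p,b,r) is the binary string of length n whose entries equal 1 exactly at the positions p+1, …, p+b other than position p+r+1. Equivalently, Ψ(e_{p+1}, …, e_{p+b−1}) is the concatenation v₀^{⊗p} ⊗ Θ_b ⊗ v₀^{⊗(n−p−b)}. -/

import Mathlib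

open scoped BigOperators

set_option maxHeartbeats 1000000
set_option synthInstance.maxHeartbeats 400000

noncomputable section

/-- The ground field `K = ℂ(q)`. -/
abbrev K : Type := RatFunc ℂ

/-- The variable `q` of `K = ℂ(q)`. -/
def q : K := RatFunc.X

/-- `T n` models the `n`-th tensor power of the vector representation of
`U_q(gl(1|1))`, as functions on binary strings of length `n`. -/
abbrev T (n : ℕ) : Type := (Fin n → Fin 2) → K

/-- The standard basis vector `v_α` of `T n`. -/
def v (n : ℕ) (α : Fin n → Fin 2) : T n := fun β => if β = α then 1 else 0

/-- `v₀^{⊗ n}`, the basis vector of the all-zeroes string. -/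
def v0 (n : ℕ) : T n := v n (fun _ => 0)

/-- `w n i` is the basis vector whose string has a single `1` in (1-indexed) position `i`. -/
def w (n i : ℕ) : T n := v n (fun j => if (j : ℕ) + 1 = i then 1 else 0)

/-- `e i = -w_i + q⁻¹ w_{i+1}`. -/
def e (n i : ℕ) : T n := -(w n i) + q⁻¹ • w n (i + 1)

/-- The `R`-matrix on a pair of strands: entry `Rmat out inp`. -/
def Rmat : Fin 2 × Fin 2 → Fin 2 × Fin 2 → K := fun out inp =>
  if inp = (0, 0) then (if out = (0, 0) then q else 0)
  else if inp = (1, 0) then (if out = (0, 1) then 1 else 0)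
  else if inp = (0, 1) then
    (if out = (1, 0) then 1 else if out = (0, 1) then q - q⁻¹ else 0)
  else (if out = (1, 1) then -q⁻¹ else 0)

/-- The `R`-matrix acting at positions `i`, `j` (0-indexed) of `T n`. -/
def PhiAux (n : ℕ) (i j : Fin n) : T n →ₗ[K] T n where
  toFun f := fun β => ∑ p : Fin 2 × Fin 2,
    Rmat (β i, β j) p * f (Function.update (Function.update β i p.1) j p.2)
  map_add' f g := by
    funext β
    try dsimp only
    simp only [Pi.add_apply]
    rw [← Finset.sum_add_distrib]
    exact Finset.sum_congr rfl fun p _ => by simp [mul_add]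
  map_smul' c f := by
    funext β
    try dsimp only
    simp only [Pi.smul_apply, smul_eq_mul, RingHom.id_apply]
    rw [Finset.mul_sum]
    exact Finset.sum_congr rfl fun p _ => by ring

/-- `Phi n t` is the map induced by the braid generator `σ_t` (with `1 ≤ t ≤ n-1`),
acting through the `R`-matrix at (1-indexed) positions `(t, t+1)`. -/
def Phi (n t : ℕ) : T n →ₗ[K] T n :=
  if h : 0 < t ∧ t < n then PhiAux n ⟨t - 1, by omega⟩ ⟨t, h.2⟩ else 0

/-- The action of `E` on `T n`. -/
def En (n : ℕ) : T n →ₗ[K] T n where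
  toFun f := fun β => ∑ i : Fin n,
    if β i = 0 then
      ((-1 : K) ^ (Finset.univ.filter (fun j : Fin n => j < i ∧ β j = 1)).card
        * q⁻¹ ^ (n - 1 - (i : ℕ))) * f (Function.update β i 1)
    else 0
  map_add' f g := by
    funext β
    try dsimp only
    simp only [Pi.add_apply]
    rw [← Finset.sum_add_distrib]
    refine Finset.sum_congr rfl fun i _ => ?_
    by_cases h : β i = 0 <;> simp [h, mul_add]
  map_smul' c f := by
    funext β
    try dsimp only
    simp only [Pi.smul_apply, smul_eq_mul, RingHom.id_apply]
    rw [Finset.mul_sum]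
    refine Finset.sum_congr rfl fun i _ => ?_
    by_cases h : β i = 0 <;> simp [h] <;> ring

/-- The action of `F` on `T n`. -/
def Fn (n : ℕ) : T n →ₗ[K] T n where
  toFun f := fun β => ∑ i : Fin n,
    if β i = 1 then
      ((-1 : K) ^ (Finset.univ.filter (fun j : Fin n => j < i ∧ β j = 1)).card
        * q ^ (i : ℕ)) * f (Function.update β i 0)
    else 0
  map_add' f g := by
    funext β
    try dsimp only
    simp only [Pi.add_apply]
    rw [← Finset.sum_add_distrib]
    refine Finset.sum_congr rfl fun i _ => ?_
    by_cases h : β i = 1 <;> simp [h, mul_add]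
  map_smul' c f := by
    funext β
    try dsimp only
    simp only [Pi.smul_apply, smul_eq_mul, RingHom.id_apply]
    rw [Finset.mul_sum]
    refine Finset.sum_congr rfl fun i _ => ?_
    by_cases h : β i = 1 <;> simp [h] <;> ring

/-- The number of `1`s in a binary string. -/
def wt {n : ℕ} (α : Fin n → Fin 2) : ℕ := (Finset.univ.filter (fun i => α i = 1)).card

/-- `Tk n k` is the span of the basis vectors with exactly `k` entries equal to `1`. -/
def Tk (n k : ℕ) : Submodule K (T n) :=
  Submodule.span K {f : T n | ∃ α, wt α = k ∧ f = v n α}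

/-- `Hk n k` is the space of highest weight vectors of weight `(n-k)ε₁ + kε₂`. -/
def Hk (n k : ℕ) : Submodule K (T n) := LinearMap.ker (En n) ⊓ Tk n k

/-- The bilinear product `m` on `T n`. -/
def mul2 (n : ℕ) (f g : T n) : T n := fun γ =>
  ∑ α : Fin n → Fin 2,
    if (∀ i, α i = 1 → γ i = 1) then
      ((-1 : K) ^ (∑ p ∈ Finset.univ.filter (fun p : Fin n × Fin n => p.1 < p.2),
          (((fun i => if α i = 1 then 0 else γ i) p.1 : Fin 2) : ℕ) * ((α p.2 : Fin 2) : ℕ)))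
        * f α * g (fun i => if α i = 1 then 0 else γ i)
    else 0

/-- The left-iterated product `Ψ(u_1, …, u_k) = m(…m(m(u_1,u_2),u_3)…,u_k)`. -/
def Psi (n : ℕ) : (k : ℕ) → (Fin k → T n) → T n
  | 0, _ => v0 n
  | 1, u => u 0
  | (k + 2), u => mul2 n (Psi n (k + 1) (fun i => u i.castSucc)) (u (Fin.last (k + 1)))

/-- Concatenation (tensor product) `T a ⊗ T b → T (a + b)`. -/
def conc {a b : ℕ} (f : T a) (g : T b) : T (a + b) := fun γ =>
  f (fun i => γ (Fin.castAdd b i)) * g (fun i => γ (Fin.natAdd a i))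

/-- Identification `T a ≃ T b` for `a = b`. -/
def castT {a b : ℕ} (h : a = b) (f : T a) : T b := fun γ => f (fun i => γ (Fin.cast h i))

/-- The block vector `Θ_b = Σ_{r=0}^{b-1} (-1)^r q^{-(b-1-r)} v_{β(r)}`. -/
def Theta (b : ℕ) : T b :=
  ∑ r : Fin b, ((-1 : K) ^ (r : ℕ) * q⁻¹ ^ (b - 1 - (r : ℕ))) •
    v b (fun i => if i = r then 0 else 1)

/-- The map induced by the braid `λ = σ_{n-1} ⋯ σ_1`. -/
def Lam (n : ℕ) : T n →ₗ[K] T n :=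
  ((List.range (n - 1)).map (fun t => Phi n (t + 1))).foldl (fun acc g => g ∘ₗ acc) LinearMap.id

/-- The Vandermonde-type matrix `B(n)`. -/
def B (n : ℕ) : Matrix (Fin n) (Fin n) K :=
  fun i j => q ^ ((i : ℤ) * (n : ℤ) * ((n : ℤ) - 1 - 2 * (j : ℤ)))

/-- `C(n) = B(n)⁻¹`. -/
def Cmat (n : ℕ) : Matrix (Fin n) (Fin n) K := (B n)⁻¹

/-- A combinatorial string `(a_1, b_1, a_2, b_2, …, b_l, a_{l+1})`. -/
structure GString where
  l : ℕ
  a : Fin (l + 1) → ℕ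
  b : Fin l → ℕ

/-- Membership of a string in `S_k` (for strands number `n`). -/
def memSk (n k : ℕ) (s : GString) : Prop :=
  (∀ i, 2 ≤ s.b i) ∧ (∑ i, (s.b i - 1)) = k ∧ ((∑ i, s.a i) + ∑ i, s.b i) = n

/-- The length of the string, computed blockwise. -/
def lenOf : (l : ℕ) → (Fin (l + 1) → ℕ) → (Fin l → ℕ) → ℕ
  | 0, a, _ => a 0
  | (l + 1), a, b => (a 0 + b 0) + lenOf l (fun i => a i.succ) (fun i => b i.succ)

/-- The concatenation `v₀^{⊗a_1} ⊗ Θ_{b_1} ⊗ ⋯ ⊗ Θ_{b_l} ⊗ v₀^{⊗a_{l+1}}`. -/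
def rawphi : (l : ℕ) → (a : Fin (l + 1) → ℕ) → (b : Fin l → ℕ) → T (lenOf l a b)
  | 0, a, _ => v0 (a 0)
  | (l + 1), a, b =>
      conc (conc (v0 (a 0)) (Theta (b 0)))
        (rawphi l (fun i => a i.succ) (fun i => b i.succ))

/-- `φ(s) ∈ T n`, the vector associated to a string `s`. -/
def phi (n : ℕ) (s : GString) : T n :=
  if h : lenOf s.l s.a s.b = n then castT h (rawphi s.l s.a s.b) else 0


lemma fin2_cases (x : Fin 2) : x = 0 ∨ x = 1 := by fin_cases x <;> simp

lemma mul2_vanish (n : ℕ) (α β : Fin n → Fin 2) (i₀ : Fin n)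
    (h1 : α i₀ = 1) (h2 : β i₀ = 1) :
    mul2 n (v n α) (v n β) = 0 := by
  funext γ
  simp only [mul2, Pi.zero_apply]
  refine Finset.sum_eq_zero fun α' _ => ?_
  split_ifs with hc
  · rcases eq_or_ne α' α with rfl | hne
    · have hne2 : (fun i => if α' i = 1 then 0 else γ i) ≠ β := by
        intro hEq
        have := congrFun hEq i₀
        rw [h1, h2] at this
        simp at this
      simp [v, hne2]
    · simp [v, hne]
  · rfl

lemma mul2_v_single (n : ℕ) (α : Fin n → Fin 2) (t : Fin n)
    (h0 : α t = 0) (htop : ∀ j : Fin n, t < j → α j = 0) :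
    mul2 n (v n α) (v n (fun j => if j = t then 1 else 0))
      = v n (fun j => if j = t then 1 else α j) := by
  funext γ
  simp only [mul2]
  rw [Finset.sum_eq_single α]
  · by_cases hγ : γ = (fun j => if j = t then 1 else α j)
    · subst hγ
      have hc : ∀ i, α i = 1 → (if i = t then (1 : Fin 2) else α i) = 1 := by
        intro i hi
        rcases eq_or_ne i t with rfl | hne
        · simp
        · simp [hne, hi]
      rw [if_pos hc]
      have hsub : (fun i => if α i = 1 then (0 : Fin 2) else if i = t then 1 else α i)
          = (fun j => if j = t then 1 else 0) := by
        funext i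
        rcases eq_or_ne i t with rfl | hne
        · simp [h0]
        · rcases fin2_cases (α i) with h | h <;> simp [h, hne]
      have hexp : (∑ p ∈ Finset.univ.filter (fun p : Fin n × Fin n => p.1 < p.2),
          (((fun i => if α i = 1 then (0:Fin 2) else if i = t then 1 else α i) p.1 : Fin 2) : ℕ)
            * ((α p.2 : Fin 2) : ℕ)) = 0 := by
        refine Finset.sum_eq_zero fun pr hpr => ?_
        simp only [Finset.mem_filter] at hpr
        rcases eq_or_ne pr.1 t with h1 | h1
        · rw [htop pr.2 (h1 ▸ hpr.2)]; simp
        · rcases fin2_cases (α pr.1) with h | h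
          · simp [h, h1]
          · simp [h]
      rw [hsub, hexp]
      simp [v]
    · rw [show v n (fun j => if j = t then 1 else α j) γ = 0 from by simp [v, hγ]]
      split_ifs with hc
      · have : (fun i => if α i = 1 then (0:Fin 2) else γ i) ≠ (fun j => if j = t then 1 else 0) := by
          intro hEq
          apply hγ
          funext i
          have hi := congrFun hEq i
          rcases fin2_cases (α i) with h | h
          · rw [if_neg (by simp [h])] at hi
            rw [hi]
            simp [h]
          · have hit : i ≠ t := fun he => by rw [he, h0] at h; exact absurd h (by simp)
            simp [hit, h, hc i h]
        simp [v, this]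
      · rfl
  · intro α' _ hne
    simp [v, hne]
  · intro h; simp at h

lemma mul2_zero_left (n : ℕ) (g : T n) : mul2 n 0 g = 0 := by
  funext γ; simp [mul2]

lemma mul2_add_left (n : ℕ) (f₁ f₂ g : T n) :
    mul2 n (f₁ + f₂) g = mul2 n f₁ g + mul2 n f₂ g := by
  funext γ
  simp only [mul2, Pi.add_apply]
  rw [← Finset.sum_add_distrib]
  refine Finset.sum_congr rfl fun α _ => ?_
  split_ifs with h
  · ring
  · ring

lemma mul2_smul_left (n : ℕ) (c : K) (f g : T n) :
    mul2 n (c • f) g = c • mul2 n f g := by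
  funext γ
  simp only [mul2, Pi.smul_apply, smul_eq_mul]
  rw [Finset.mul_sum]
  refine Finset.sum_congr rfl fun α _ => ?_
  split_ifs with h
  · ring
  · ring

lemma mul2_sum_left (n : ℕ) {ι : Type*} (s : Finset ι) (f : ι → T n) (g : T n) :
    mul2 n (∑ i ∈ s, f i) g = ∑ i ∈ s, mul2 n (f i) g := by
  classical
  induction s using Finset.induction_on with
  | empty => simp [mul2_zero_left]
  | insert _ _ hx ih =>
      rw [Finset.sum_insert hx, Finset.sum_insert hx, mul2_add_left, ih]

lemma mul2_add_right (n : ℕ) (f g₁ g₂ : T n) :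
    mul2 n f (g₁ + g₂) = mul2 n f g₁ + mul2 n f g₂ := by
  funext γ
  simp only [mul2, Pi.add_apply]
  rw [← Finset.sum_add_distrib]
  refine Finset.sum_congr rfl fun α _ => ?_
  split_ifs with h
  · ring
  · ring

lemma mul2_smul_right (n : ℕ) (c : K) (f g : T n) :
    mul2 n f (c • g) = c • mul2 n f g := by
  funext γ
  simp only [mul2, Pi.smul_apply, smul_eq_mul]
  rw [Finset.mul_sum]
  refine Finset.sum_congr rfl fun α _ => ?_
  split_ifs with h
  · ring
  · ring

lemma mul2_neg_right (n : ℕ) (f g : T n) :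
    mul2 n f (-g) = -mul2 n f g := by
  have := mul2_smul_right n (-1) f g
  simpa using this

lemma psi_eq (n p : ℕ) : ∀ b : ℕ, 2 ≤ b → p + b ≤ n →
    Psi n (b - 1) (fun i => e n (p + 1 + (i : ℕ)))
      = ∑ r : Fin b, ((-1 : K) ^ (r : ℕ) * q⁻¹ ^ (b - 1 - (r : ℕ))) •
          v n (fun i => if p ≤ (i : ℕ) ∧ (i : ℕ) < p + b ∧ (i : ℕ) ≠ p + (r : ℕ) then 1 else 0) := by
  intro b hb
  induction b, hb using Nat.le_induction with
  | base =>
      intro hpb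
      have hP : Psi n (2 - 1) (fun i => e n (p + 1 + (i : ℕ))) = e n (p + 1 + ((0 : Fin 1) : ℕ)) := rfl
      rw [hP, Fin.sum_univ_two, e, w, w]
      simp only [Fin.val_zero, Fin.val_one, Nat.add_zero]
      norm_num
      rw [show (fun j : Fin n => if (j : ℕ) = p then (1 : Fin 2) else 0)
          = (fun i : Fin n => if p ≤ (i : ℕ) ∧ (i : ℕ) < p + 2 ∧ ¬(i : ℕ) = p + 1 then 1 else 0) from
        funext fun j => if_congr (by omega) rfl rfl]
      rw [show (fun j : Fin n => if (j : ℕ) = p + 1 then (1 : Fin 2) else 0)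
          = (fun i : Fin n => if p ≤ (i : ℕ) ∧ (i : ℕ) < p + 2 ∧ ¬(i : ℕ) = p then 1 else 0) from
        funext fun j => if_congr (by omega) rfl rfl]
      abel
  | succ b hb ih =>
      intro hpb
      obtain ⟨k, rfl⟩ : ∃ k, b = k + 2 := ⟨b - 2, by omega⟩
      have h1 : Psi n (k + 2 + 1 - 1) (fun i => e n (p + 1 + (i : ℕ)))
          = mul2 n (Psi n (k + 1) (fun i : Fin (k + 1) => e n (p + 1 + ((i.castSucc : Fin (k + 2)) : ℕ))))
              (e n (p + 1 + ((Fin.last (k + 1)) : ℕ))) := rfl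
      rw [h1]
      simp only [Fin.coe_castSucc, Fin.val_last]
      have hih : Psi n (k + 1) (fun i : Fin (k + 1) => e n (p + 1 + (i : ℕ)))
          = ∑ r : Fin (k + 2), ((-1 : K) ^ (r : ℕ) * q⁻¹ ^ (k + 2 - 1 - (r : ℕ))) •
              v n (fun i => if p ≤ (i : ℕ) ∧ (i : ℕ) < p + (k + 2) ∧ (i : ℕ) ≠ p + (r : ℕ) then 1 else 0) :=
        ih (by omega)
      rw [hih, show p + 1 + (k + 1) = p + k + 2 from by omega, e]
      rw [mul2_add_right, mul2_neg_right, mul2_smul_right, mul2_sum_left, mul2_sum_left]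
      obtain ⟨t₁, ht₁⟩ : ∃ t : Fin n, (t : ℕ) = p + k + 1 := ⟨⟨p + k + 1, by omega⟩, rfl⟩
      obtain ⟨t₂, ht₂⟩ : ∃ t : Fin n, (t : ℕ) = p + k + 2 := ⟨⟨p + k + 2, by omega⟩, rfl⟩
      have hw1 : w n (p + k + 2) = v n (fun j => if j = t₁ then 1 else 0) := by
        rw [w]
        rw [show (fun j : Fin n => if (j : ℕ) + 1 = p + k + 2 then (1 : Fin 2) else 0)
            = (fun j : Fin n => if j = t₁ then (1 : Fin 2) else 0) from
          funext fun j => if_congr (by simp only [Fin.ext_iff, ht₁]; omega) rfl rfl]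
      have hw2 : w n (p + k + 2 + 1) = v n (fun j => if j = t₂ then 1 else 0) := by
        rw [w]
        rw [show (fun j : Fin n => if (j : ℕ) + 1 = p + k + 2 + 1 then (1 : Fin 2) else 0)
            = (fun j : Fin n => if j = t₂ then (1 : Fin 2) else 0) from
          funext fun j => if_congr (by simp only [Fin.ext_iff, ht₂]; omega) rfl rfl]
      rw [hw1, hw2]
      have hS1 : (∑ r : Fin (k + 2), mul2 n ((((-1 : K)) ^ (r : ℕ) * q⁻¹ ^ (k + 2 - 1 - (r : ℕ))) •
            v n fun i => if p ≤ (i : ℕ) ∧ (i : ℕ) < p + (k + 2) ∧ (i : ℕ) ≠ p + (r : ℕ) then 1 else 0)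
            (v n (fun j => if j = t₁ then 1 else 0)))
          = (((-1 : K)) ^ (k + 1) * q⁻¹ ^ (k + 2 - 1 - (k + 1))) •
              v n (fun i => if p ≤ (i : ℕ) ∧ (i : ℕ) < p + (k + 2 + 1) ∧ (i : ℕ) ≠ p + (k + 2) then 1 else 0) := by
        rw [Fin.sum_univ_castSucc]
        have hz : ∀ r : Fin (k + 1), mul2 n ((((-1 : K)) ^ ((r.castSucc : Fin (k + 2)) : ℕ) * q⁻¹ ^ (k + 2 - 1 - ((r.castSucc : Fin (k + 2)) : ℕ))) •
              v n fun i => if p ≤ (i : ℕ) ∧ (i : ℕ) < p + (k + 2) ∧ (i : ℕ) ≠ p + ((r.castSucc : Fin (k + 2)) : ℕ) then 1 else 0)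
              (v n (fun j => if j = t₁ then 1 else 0)) = 0 := by
          intro r
          have hr : (r : ℕ) < k + 1 := r.isLt
          have h1 : (if p ≤ (t₁ : ℕ) ∧ (t₁ : ℕ) < p + (k + 2) ∧ (t₁ : ℕ) ≠ p + ((r.castSucc : Fin (k + 2)) : ℕ) then (1 : Fin 2) else 0) = 1 := by
            rw [if_pos]
            simp only [Fin.coe_castSucc]
            omega
          have h2 : (if t₁ = t₁ then (1 : Fin 2) else 0) = 1 := by simp
          rw [mul2_smul_left, mul2_vanish n _ _ t₁ h1 h2, smul_zero]
        rw [Finset.sum_eq_zero (fun r _ => hz r), zero_add]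
        have h0 : (if p ≤ (t₁ : ℕ) ∧ (t₁ : ℕ) < p + (k + 2) ∧ (t₁ : ℕ) ≠ p + ((Fin.last (k + 1) : Fin (k + 2)) : ℕ) then (1 : Fin 2) else 0) = 0 := by
          rw [if_neg]
          simp only [Fin.val_last]
          omega
        have htop : ∀ j : Fin n, t₁ < j →
            (if p ≤ (j : ℕ) ∧ (j : ℕ) < p + (k + 2) ∧ (j : ℕ) ≠ p + ((Fin.last (k + 1) : Fin (k + 2)) : ℕ) then (1 : Fin 2) else 0) = 0 := by
          intro j hj
          have : (t₁ : ℕ) < (j : ℕ) := hj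
          rw [if_neg]
          omega
        rw [mul2_smul_left, mul2_v_single n _ t₁ h0 htop]
        simp only [Fin.val_last]
        have hpat : (fun j : Fin n => if j = t₁ then (1 : Fin 2)
              else if p ≤ (j : ℕ) ∧ (j : ℕ) < p + (k + 2) ∧ (j : ℕ) ≠ p + (k + 1) then 1 else 0)
            = (fun i : Fin n => if p ≤ (i : ℕ) ∧ (i : ℕ) < p + (k + 2 + 1) ∧ (i : ℕ) ≠ p + (k + 2) then 1 else 0) := by
          funext j
          by_cases hj : j = t₁
          · rw [if_pos hj, if_pos]
            have : (j : ℕ) = p + k + 1 := by rw [hj, ht₁]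
            omega
          · rw [if_neg hj]
            have hval : (j : ℕ) ≠ p + k + 1 := by
              intro hc; exact hj (Fin.ext (by rw [hc, ht₁]))
            exact if_congr (by omega) rfl rfl
        rw [hpat]
      have hS2 : (∑ r : Fin (k + 2), mul2 n ((((-1 : K)) ^ (r : ℕ) * q⁻¹ ^ (k + 2 - 1 - (r : ℕ))) •
            v n fun i => if p ≤ (i : ℕ) ∧ (i : ℕ) < p + (k + 2) ∧ (i : ℕ) ≠ p + (r : ℕ) then 1 else 0)
            (v n (fun j => if j = t₂ then 1 else 0)))
          = ∑ r : Fin (k + 2), (((-1 : K)) ^ (r : ℕ) * q⁻¹ ^ (k + 2 - 1 - (r : ℕ))) •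
              v n (fun i => if p ≤ (i : ℕ) ∧ (i : ℕ) < p + (k + 2 + 1) ∧ (i : ℕ) ≠ p + (r : ℕ) then 1 else 0) := by
        refine Finset.sum_congr rfl fun r _ => ?_
        have hr : (r : ℕ) < k + 2 := r.isLt
        have h0 : (if p ≤ (t₂ : ℕ) ∧ (t₂ : ℕ) < p + (k + 2) ∧ (t₂ : ℕ) ≠ p + (r : ℕ) then (1 : Fin 2) else 0) = 0 := by
          rw [if_neg]; omega
        have htop : ∀ j : Fin n, t₂ < j →
            (if p ≤ (j : ℕ) ∧ (j : ℕ) < p + (k + 2) ∧ (j : ℕ) ≠ p + (r : ℕ) then (1 : Fin 2) else 0) = 0 := by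
          intro j hj
          have : (t₂ : ℕ) < (j : ℕ) := hj
          rw [if_neg]
          omega
        rw [mul2_smul_left, mul2_v_single n _ t₂ h0 htop]
        have hpat : (fun j : Fin n => if j = t₂ then (1 : Fin 2)
              else if p ≤ (j : ℕ) ∧ (j : ℕ) < p + (k + 2) ∧ (j : ℕ) ≠ p + (r : ℕ) then 1 else 0)
            = (fun i : Fin n => if p ≤ (i : ℕ) ∧ (i : ℕ) < p + (k + 2 + 1) ∧ (i : ℕ) ≠ p + (r : ℕ) then 1 else 0) := by
          funext j
          by_cases hj : j = t₂
          · rw [if_pos hj, if_pos]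
            have : (j : ℕ) = p + k + 2 := by rw [hj, ht₂]
            omega
          · rw [if_neg hj]
            have hval : (j : ℕ) ≠ p + k + 2 := by
              intro hc; exact hj (Fin.ext (by rw [hc, ht₂]))
            exact if_congr (by omega) rfl rfl
        rw [hpat]
      rw [hS1, hS2]
      conv_rhs => rw [Fin.sum_univ_castSucc]
      simp only [Fin.coe_castSucc, Fin.val_last]
      have hsum : q⁻¹ • (∑ r : Fin (k + 2), (((-1 : K)) ^ (r : ℕ) * q⁻¹ ^ (k + 2 - 1 - (r : ℕ))) •
            v n (fun i => if p ≤ (i : ℕ) ∧ (i : ℕ) < p + (k + 2 + 1) ∧ (i : ℕ) ≠ p + (r : ℕ) then 1 else 0))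
          = ∑ r : Fin (k + 2), (((-1 : K)) ^ (r : ℕ) * q⁻¹ ^ (k + 2 + 1 - 1 - (r : ℕ))) •
              v n (fun i => if p ≤ (i : ℕ) ∧ (i : ℕ) < p + (k + 2 + 1) ∧ (i : ℕ) ≠ p + (r : ℕ) then 1 else 0) := by
        rw [Finset.smul_sum]
        refine Finset.sum_congr rfl fun r _ => ?_
        rw [smul_smul]
        congr 1
        rw [show k + 2 + 1 - 1 - (r : ℕ) = (k + 2 - 1 - (r : ℕ)) + 1 from by have := r.isLt; omega,
          pow_succ]
        ring
      rw [hsum]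
      have hlast : -((((-1 : K)) ^ (k + 1) * q⁻¹ ^ (k + 2 - 1 - (k + 1))) •
            v n (fun i => if p ≤ (i : ℕ) ∧ (i : ℕ) < p + (k + 2 + 1) ∧ (i : ℕ) ≠ p + (k + 2) then 1 else 0))
          = (((-1 : K)) ^ (k + 2) * q⁻¹ ^ (k + 2 + 1 - 1 - (k + 2))) •
              v n (fun i => if p ≤ (i : ℕ) ∧ (i : ℕ) < p + (k + 2 + 1) ∧ (i : ℕ) ≠ p + (k + 2) then 1 else 0) := by
        rw [show k + 2 - 1 - (k + 1) = 0 from by omega, show k + 2 + 1 - 1 - (k + 2) = 0 from by omega,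
          ← neg_smul]
        congr 1
        rw [pow_succ]
        ring
      rw [hlast]
      exact add_comm _ _

lemma conc_eq (n p b : ℕ) (hb : 2 ≤ b) (hpb : p + b ≤ n) (h : p + b + (n - p - b) = n) :
    castT h (conc (conc (v0 p) (Theta b)) (v0 (n - p - b)))
      = ∑ r : Fin b, ((-1 : K) ^ (r : ℕ) * q⁻¹ ^ (b - 1 - (r : ℕ))) •
          v n (fun i => if p ≤ (i : ℕ) ∧ (i : ℕ) < p + b ∧ (i : ℕ) ≠ p + (r : ℕ) then 1 else 0) := by
  funext γ
  simp only [castT, conc, Theta, v0, v, Finset.sum_apply, Pi.smul_apply, smul_eq_mul]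
  rw [Finset.mul_sum, Finset.sum_mul]
  refine Finset.sum_congr rfl fun r _ => ?_
  have hiff : (((fun i : Fin p => γ (Fin.cast h (Fin.castAdd (n - p - b) (Fin.castAdd b i)))) = fun _ => 0)
      ∧ ((fun i : Fin b => γ (Fin.cast h (Fin.castAdd (n - p - b) (Fin.natAdd p i)))) = fun i => if i = r then 0 else 1)
      ∧ ((fun i : Fin (n - p - b) => γ (Fin.cast h (Fin.natAdd (p + b) i))) = fun _ => 0))
      ↔ γ = fun i : Fin n => if p ≤ (i : ℕ) ∧ (i : ℕ) < p + b ∧ (i : ℕ) ≠ p + (r : ℕ) then (1 : Fin 2) else 0 := by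
    have hrb : (r : ℕ) < b := r.isLt
    constructor
    · rintro ⟨hA, hI, hC⟩
      funext j
      rcases lt_or_ge ((j : ℕ)) p with hj | hj
      · have hx := congrFun hA ⟨(j : ℕ), hj⟩
        rw [show Fin.cast h (Fin.castAdd (n - p - b) (Fin.castAdd b ⟨(j : ℕ), hj⟩)) = j from
          Fin.ext (by simp)] at hx
        rw [hx, if_neg (by omega)]
      · rcases lt_or_ge ((j : ℕ)) (p + b) with hj2 | hj2
        · have hx := congrFun hI ⟨(j : ℕ) - p, by omega⟩
          rw [show Fin.cast h (Fin.castAdd (n - p - b) (Fin.natAdd p ⟨(j : ℕ) - p, by omega⟩)) = j from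
            Fin.ext (by simp; omega)] at hx
          rw [hx]
          by_cases hr : (j : ℕ) = p + (r : ℕ)
          · rw [if_pos (Fin.ext (by simp; omega)), if_neg (by omega)]
          · rw [if_neg (fun hc => hr (by
                have hv := congrArg Fin.val hc
                simp at hv
                omega)), if_pos ⟨hj, hj2, hr⟩]
        · have hx := congrFun hC ⟨(j : ℕ) - (p + b), by omega⟩
          rw [show Fin.cast h (Fin.natAdd (p + b) ⟨(j : ℕ) - (p + b), by omega⟩) = j from
            Fin.ext (by simp; omega)] at hx
          rw [hx, if_neg (by omega)]
    · rintro rfl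
      refine ⟨funext fun i => ?_, funext fun i => ?_, funext fun i => ?_⟩
      · simp only [Fin.coe_cast, Fin.coe_castAdd, Fin.coe_natAdd]
        rw [if_neg]
        have := i.isLt
        omega
      · simp only [Fin.coe_cast, Fin.coe_castAdd, Fin.coe_natAdd]
        by_cases hir : i = r
        · subst hir
          rw [if_neg (by omega), if_pos rfl]
        · have hvne : (i : ℕ) ≠ (r : ℕ) := fun hc => hir (Fin.ext hc)
          have := i.isLt
          rw [if_pos ⟨by omega, by omega, by omega⟩, if_neg hir]
      · simp only [Fin.coe_cast, Fin.coe_castAdd, Fin.coe_natAdd]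
        rw [if_neg]
        omega
  by_cases hγ : γ = (fun i : Fin n => if p ≤ (i : ℕ) ∧ (i : ℕ) < p + b ∧ (i : ℕ) ≠ p + (r : ℕ) then (1 : Fin 2) else 0)
  · obtain ⟨hA, hI, hC⟩ := hiff.2 hγ
    rw [if_pos hA, if_pos hI, if_pos hC, if_pos hγ]
    ring
  · rw [if_neg hγ, mul_zero]
    split_ifs with h1 h2 h3
    · exact absurd (hiff.1 ⟨h1, h2, h3⟩) hγ
    all_goals ring

theorem stmt13 (n p b : ℕ) (hn : 2 ≤ n) (hb : 2 ≤ b) (hpb : p + b ≤ n) :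
    Psi n (b - 1) (fun i => e n (p + 1 + (i : ℕ)))
      = ∑ r : Fin b, ((-1 : K) ^ (r : ℕ) * q⁻¹ ^ (b - 1 - (r : ℕ))) •
          v n (fun i => if p ≤ (i : ℕ) ∧ (i : ℕ) < p + b ∧ (i : ℕ) ≠ p + (r : ℕ) then 1 else 0) ∧
    Psi n (b - 1) (fun i => e n (p + 1 + (i : ℕ)))
      = castT (by omega : p + b + (n - p - b) = n)
          (conc (conc (v0 p) (Theta b)) (v0 (n - p - b))) := by
  refine ⟨psi_eq n p b hb hpb, ?_⟩
  rw [psi_eq n p b hb hpb]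
  exact (conc_eq n p b hb hpb _).symm

end
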